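/- For all integers m ≥ 1 and 1 ≤ k ≤ m, the sum over all permutations π of an m-element set of α_k(π)·2^{α(π)} equals 2 · C(m,k) · (k−1)! · (m−k+1)!. -/

import Mathlib

/-- `αₖ(π)`: the number of cycles of length `k` of the permutation `π`
(fixed points count as cycles of length 1). -/
def cycCount {m : ℕ} (k : ℕ) (π : Equiv.Perm (Fin m)) : ℕ :=
  if k = 1 then (Finset.univ.filter fun x => π x = x).card
  else Multiset.count k π.cycleType

/-- `α(π)`: the total number of cycles of `π` (fixed points included). -/
def cycTotal {m : ℕ} (π : Equiv.Perm (Fin m)) : ℕ :=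
  Multiset.card π.cycleType + (Finset.univ.filter fun x => π x = x).card

open Equiv Equiv.Perm Finset


open scoped Classical in
/-- Gauss-type sum. -/
private lemma gauss_aux (n : ℕ) :
    ∑ j ∈ Finset.Icc 2 (n + 1), (n + 2 - j) = ∑ i ∈ Finset.range (n + 1), i := by
  rw [Finset.sum_range_succ' (fun i => i) n]
  simp only [add_zero]
  symm
  apply Finset.sum_nbij' (i := fun i => n + 1 - i) (j := fun j => n + 1 - j)
  · intro i hi
    simp only [Finset.mem_range] at hi
    simp only [Finset.mem_Icc]
    omega
  · intro j hj
    simp only [Finset.mem_Icc] at hj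
    simp only [Finset.mem_range]
    omega
  · intro i hi
    simp only [Finset.mem_range] at hi
    omega
  · intro j hj
    simp only [Finset.mem_Icc] at hj
    omega
  · intro i hi
    simp only [Finset.mem_range] at hi
    omega

section Tot
open scoped Classical

variable {β : Type*} [Fintype β] [DecidableEq β]

/-- general total cycle count -/
def tot (π : Equiv.Perm β) : ℕ :=
  Multiset.card π.cycleType + (Finset.univ.filter fun x => π x = x).card

lemma fixedCard (π : Equiv.Perm β) :
    (Finset.univ.filter fun x => π x = x).card = Fintype.card β - π.support.card := by
  have h := Finset.card_filter_add_card_filter_not (s := (univ : Finset β))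
    (p := fun x => π x = x)
  simp only [Finset.card_univ] at h
  have hs : π.support = univ.filter fun x => ¬ π x = x := rfl
  rw [hs]
  omega

lemma tot_eq (π : Equiv.Perm β) :
    tot π = Multiset.card π.cycleType + (Fintype.card β - π.support.card) := by
  rw [tot, fixedCard]

lemma tot_ofSubtype {p : β → Prop} [DecidablePred p] (τ : Equiv.Perm (Subtype p)) :
    tot (Equiv.Perm.ofSubtype τ) + Fintype.card (Subtype p) = tot τ + Fintype.card β := by
  rw [tot_eq, tot_eq, Equiv.Perm.cycleType_ofSubtype, Equiv.Perm.support_ofSubtype,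
    Finset.card_map]
  have h1 : τ.support.card ≤ Fintype.card (Subtype p) := by
    simpa using Finset.card_le_univ τ.support
  have h2 : Fintype.card (Subtype p) ≤ Fintype.card β := by
    simpa using Fintype.card_subtype_le p
  omega

lemma tot_disjoint_mul {σ τ : Equiv.Perm β} (h : Equiv.Perm.Disjoint σ τ) :
    tot (σ * τ) + Fintype.card β = tot σ + tot τ := by
  rw [tot_eq, tot_eq, tot_eq, h.cycleType_mul, h.support_mul,
    Finset.card_union_of_disjoint h.disjoint_support]
  have h1 : σ.support.card + τ.support.card ≤ Fintype.card β := by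
    rw [← Finset.card_union_of_disjoint h.disjoint_support]
    simpa using Finset.card_le_univ (σ.support ∪ τ.support)
  simp only [Multiset.card_add]
  omega

lemma disjoint_cycle_ofSubtype {c : Equiv.Perm β}
    (τ : Equiv.Perm {x // x ∉ c.support}) :
    Equiv.Perm.Disjoint c (Equiv.Perm.ofSubtype τ) := by
  intro x
  by_cases hx : x ∈ c.support
  · right
    exact Equiv.Perm.ofSubtype_apply_of_not_mem τ (not_not_intro hx)
  · left
    simpa using hx

lemma card_compl_support {c : Equiv.Perm β} :
    Fintype.card {x // x ∉ c.support} = Fintype.card β - c.support.card := by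
  rw [Fintype.card_subtype_compl, Fintype.card_coe]

lemma tot_cycle_mul_ofSubtype {c : Equiv.Perm β} (hc : c.IsCycle)
    (τ : Equiv.Perm {x // x ∉ c.support}) :
    tot (c * Equiv.Perm.ofSubtype τ) = tot τ + 1 := by
  have hd := disjoint_cycle_ofSubtype τ
  have h1 := tot_disjoint_mul hd
  have h2 := tot_ofSubtype τ
  rw [card_compl_support] at h2
  have h3 : tot c = 1 + (Fintype.card β - c.support.card) := by
    rw [tot_eq, hc.cycleType]; simp
  have h4 : c.support.card ≤ Fintype.card β := by simpa using Finset.card_le_univ c.support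
  omega

lemma tot_ofSubtype_ne (x₀ : β) (τ : Equiv.Perm {y // y ≠ x₀}) :
    tot (Equiv.Perm.ofSubtype τ) = tot τ + 1 := by
  have h := tot_ofSubtype τ
  have hc : Fintype.card {y // y ≠ x₀} + 1 = Fintype.card β := by
    rw [Fintype.card_subtype_compl (p := fun y => y = x₀), Fintype.card_subtype_eq]
    have : 1 ≤ Fintype.card β := Fintype.card_pos_iff.mpr ⟨x₀⟩
    omega
  omega

lemma not_mem_support_iff_of_mem_cycleFactorsFinset {c π : Equiv.Perm β}
    (hπ : c ∈ π.cycleFactorsFinset) (x : β) : x ∉ c.support ↔ π x ∉ c.support := by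
  have hcomm : Commute c π := Equiv.Perm.self_mem_cycle_factors_commute hπ
  suffices h : x ∈ c.support ↔ π x ∈ c.support by tauto
  simp only [Equiv.Perm.mem_support]
  have h2 : c (π x) = π (c x) := by
    rw [← Equiv.Perm.mul_apply, ← Equiv.Perm.mul_apply, hcomm.eq]
  constructor
  · intro h hx
    apply h
    rw [h2] at hx
    exact π.injective hx
  · intro h hx
    apply h
    rw [h2, hx]

lemma sum_cycle_mem (c : Equiv.Perm β) (hc : c.IsCycle) :
    ∑ π ∈ univ.filter (fun π => c ∈ π.cycleFactorsFinset), 2 ^ (tot π)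
      = ∑ τ : Equiv.Perm {x // x ∉ c.support}, 2 ^ (tot τ + 1) := by
  symm
  apply Finset.sum_bij (i := fun τ _ => c * Equiv.Perm.ofSubtype τ)
  · intro τ _
    simp only [mem_filter, mem_univ, true_and]
    rw [Equiv.Perm.mem_cycleFactorsFinset_iff]
    refine ⟨hc, fun a ha => ?_⟩
    rw [Equiv.Perm.mul_apply, Equiv.Perm.ofSubtype_apply_of_not_mem τ (not_not_intro ha)]
  · intro τ _ τ' _ h
    have h2 := mul_left_cancel h
    ext x
    have := congrArg (fun (g : Equiv.Perm β) => g (x : β)) h2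
    simpa [Equiv.Perm.ofSubtype_apply_of_mem (p := fun x => x ∉ c.support) _ x.2,
      Subtype.ext_iff] using this
  · intro π hπ
    simp only [mem_filter, mem_univ, true_and] at hπ
    refine ⟨(π.subtypePerm (fun x => (not_mem_support_iff_of_mem_cycleFactorsFinset hπ x).symm) :
      Equiv.Perm {x // x ∉ c.support}), mem_univ _, ?_⟩
    ext x
    by_cases hx : x ∈ c.support
    · rw [Equiv.Perm.mul_apply,
        Equiv.Perm.ofSubtype_apply_of_not_mem (p := fun x => x ∉ c.support) _ (not_not_intro hx)]
      exact ((Equiv.Perm.mem_cycleFactorsFinset_iff.mp hπ).2 x hx)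
    · rw [Equiv.Perm.mul_apply,
        Equiv.Perm.ofSubtype_apply_of_mem (p := fun x => x ∉ c.support) _ hx,
        Equiv.Perm.subtypePerm_apply]
      simp only
      have : π x ∉ c.support :=
        (not_mem_support_iff_of_mem_cycleFactorsFinset hπ x).mp hx
      exact Equiv.Perm.notMem_support.mp this
  · intro τ _
    rw [tot_cycle_mul_ofSubtype hc]

lemma sum_fixing_point (x₀ : β) :
    ∑ π ∈ univ.filter (fun π : Equiv.Perm β => π x₀ = x₀), 2 ^ (tot π)
      = ∑ τ : Equiv.Perm {y // y ≠ x₀}, 2 ^ (tot τ + 1) := by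
  symm
  apply Finset.sum_bij (i := fun τ _ => Equiv.Perm.ofSubtype τ)
  · intro τ _
    simp only [mem_filter, mem_univ, true_and]
    exact Equiv.Perm.ofSubtype_apply_of_not_mem (p := fun y => y ≠ x₀) τ (not_not_intro rfl)
  · intro τ _ τ' _ h
    ext x
    have := congrArg (fun (g : Equiv.Perm β) => g (x : β)) h
    simpa [Equiv.Perm.ofSubtype_apply_of_mem (p := fun y => y ≠ x₀) _ x.2,
      Subtype.ext_iff] using this
  · intro π hπ
    simp only [mem_filter, mem_univ, true_and] at hπ
    have hiff : ∀ y : β, y ≠ x₀ ↔ π y ≠ x₀ := by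
      intro y
      constructor
      · intro h hy
        exact h (π.injective (hy.trans hπ.symm))
      · intro h hy
        exact h (hy ▸ hπ)
    refine ⟨(π.subtypePerm (fun y => (hiff y).symm) : Equiv.Perm {y // y ≠ x₀}), mem_univ _, ?_⟩
    ext x
    by_cases hx : x = x₀
    · rw [Equiv.Perm.ofSubtype_apply_of_not_mem (p := fun y => y ≠ x₀) _ (not_not_intro hx)]
      rw [hx, hπ]
    · rw [Equiv.Perm.ofSubtype_apply_of_mem (p := fun y => y ≠ x₀) _ hx,
        Equiv.Perm.subtypePerm_apply]
  · intro τ _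
    rw [tot_ofSubtype_ne]

lemma Equiv.Perm.get_toList (p : Equiv.Perm β) (x : β) (n : ℕ)
    (hn : n < (Equiv.Perm.toList p x).length) :
    (Equiv.Perm.toList p x).get ⟨n, hn⟩ = (p ^ n) x := by
  simp [Equiv.Perm.getElem_toList]

lemma length_toList_cycle {c : Equiv.Perm β} (hc : c.IsCycle) {x : β} (hx : x ∈ c.support) :
    (Equiv.Perm.toList c x).length = c.support.card := by
  rw [Equiv.Perm.length_toList, hc.cycleOf_eq (Equiv.Perm.mem_support.mp hx)]

lemma card_cycles_mul (k : ℕ) (hk : 2 ≤ k) :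
    (univ.filter fun c : Equiv.Perm β => c.IsCycle ∧ c.support.card = k).card * k
      = (Fintype.card β).descFactorial k := by
  set s := univ.filter fun c : Equiv.Perm β => c.IsCycle ∧ c.support.card = k with hs
  have h1 : (s.sigma fun c => c.support).card = s.card * k := by
    rw [Finset.card_sigma]
    rw [Finset.sum_congr rfl (fun c hcs => ((Finset.mem_filter.mp hcs).2.2 : _)),
      Finset.sum_const, smul_eq_mul]
  rw [← h1, ← Fintype.card_fin k, ← Fintype.card_embedding_eq, ← Finset.card_univ]
  apply Finset.card_bij
    (i := fun (a : Σ _ : Equiv.Perm β, β) (ha : a ∈ s.sigma fun c => c.support) =>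
      (⟨fun i : Fin k => (a.1 ^ (i : ℕ)) a.2, by
        obtain ⟨ha1, ha2⟩ := Finset.mem_sigma.mp ha
        have hlen : (Equiv.Perm.toList a.1 a.2).length = k := by
          rw [length_toList_cycle (Finset.mem_filter.mp ha1).2.1 ha2,
            (Finset.mem_filter.mp ha1).2.2]
        intro i j hij
        simp only at hij
        have hi := Equiv.Perm.get_toList a.1 a.2 i (by rw [hlen]; exact i.2)
        have hj := Equiv.Perm.get_toList a.1 a.2 j (by rw [hlen]; exact j.2)
        have := List.nodup_iff_injective_get.mp (Equiv.Perm.nodup_toList a.1 a.2)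
          (hi.trans (hij.trans hj.symm))
        exact Fin.ext (by simpa [Fin.ext_iff] using this)⟩ : Fin k ↪ β))
  · intro a ha; exact Finset.mem_univ _
  · intro a ha b hb hab
    obtain ⟨ha1, ha2⟩ := Finset.mem_sigma.mp ha
    obtain ⟨hacyc, hacard⟩ := (Finset.mem_filter.mp ha1).2
    obtain ⟨hb1, hb2⟩ := Finset.mem_sigma.mp hb
    obtain ⟨hbcyc, hbcard⟩ := (Finset.mem_filter.mp hb1).2
    have hfun : ∀ i : Fin k, (a.1 ^ (i : ℕ)) a.2 = (b.1 ^ (i : ℕ)) b.2 := by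
      intro i
      exact congrArg (fun (e : Fin k ↪ β) => e i) hab
    have hx : a.2 = b.2 := by simpa using hfun ⟨0, by omega⟩
    have hlena : (Equiv.Perm.toList a.1 a.2).length = k := by
      rw [length_toList_cycle hacyc ha2, hacard]
    have hlenb : (Equiv.Perm.toList b.1 b.2).length = k := by
      rw [length_toList_cycle hbcyc hb2, hbcard]
    have hlist : Equiv.Perm.toList a.1 a.2 = Equiv.Perm.toList b.1 b.2 := by
      apply List.ext_get (by rw [hlena, hlenb])
      intro n hn1 hn2
      have hnk : n < k := by rw [hlena] at hn1; exact hn1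
      rw [Equiv.Perm.get_toList, Equiv.Perm.get_toList]
      exact hfun ⟨n, hnk⟩
    have hca : (Equiv.Perm.toList a.1 a.2).formPerm = a.1 := by
      rw [Equiv.Perm.formPerm_toList, hacyc.cycleOf_eq (Equiv.Perm.mem_support.mp ha2)]
    have hcb : (Equiv.Perm.toList b.1 b.2).formPerm = b.1 := by
      rw [Equiv.Perm.formPerm_toList, hbcyc.cycleOf_eq (Equiv.Perm.mem_support.mp hb2)]
    have h2 : a.1 = b.1 := by rw [← hca, ← hcb, hlist]
    exact Sigma.ext h2 (by rw [hx])
  · intro e _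
    have hnodup : (List.ofFn ⇑e).Nodup := List.nodup_ofFn.mpr e.injective
    have hlen : (List.ofFn ⇑e).length = k := List.length_ofFn
    have hlen2 : 2 ≤ (List.ofFn ⇑e).length := by rw [hlen]; exact hk
    have hpos : 0 < (List.ofFn ⇑e).length := by omega
    set c := (List.ofFn ⇑e).formPerm with hc
    have hcyc : c.IsCycle := List.isCycle_formPerm hnodup hlen2
    have hsupp : c.support = (List.ofFn ⇑e).toFinset := by
      apply List.support_formPerm_of_nodup _ hnodup
      intro x hx
      rw [hx] at hlen2; simp at hlen2
    have hcard : c.support.card = k := by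
      rw [hsupp, List.card_toFinset, List.dedup_eq_self.mpr hnodup, hlen]
    have hmem : (List.ofFn ⇑e).get ⟨0, hpos⟩ ∈ c.support := by
      rw [hsupp, List.mem_toFinset]; exact List.get_mem _ _
    refine ⟨⟨c, (List.ofFn ⇑e).get ⟨0, hpos⟩⟩, Finset.mem_sigma.mpr
      ⟨Finset.mem_filter.mpr ⟨Finset.mem_univ _, hcyc, hcard⟩, hmem⟩, ?_⟩
    ext i
    simp only [Function.Embedding.coeFn_mk]
    have htl : Equiv.Perm.toList c ((List.ofFn ⇑e).get ⟨0, hpos⟩) = List.ofFn ⇑e :=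
      Equiv.Perm.toList_formPerm_nontrivial _ hlen2 hnodup
    have hik : (i : ℕ) < (Equiv.Perm.toList c ((List.ofFn ⇑e).get ⟨0, hpos⟩)).length := by
      rw [htl, hlen]; exact i.2
    have h2 := Equiv.Perm.get_toList c ((List.ofFn ⇑e).get ⟨0, hpos⟩) i hik
    rw [← h2, List.get_of_eq htl]
    simp [List.get_ofFn]

end Tot


open scoped Classical in
lemma totSum_eq : ∀ (n : ℕ) (β : Type) [Fintype β] [DecidableEq β],
    Fintype.card β = n → ∑ τ : Equiv.Perm β, 2 ^ (tot τ) = (n + 1).factorial := by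
  intro n
  induction n using Nat.strong_induction_on with
  | _ n IH =>
    intro β _ _ hcard
    rcases Nat.eq_zero_or_pos n with hn | hn
    · subst hn
      have hβ : IsEmpty β := Fintype.card_eq_zero_iff.mp hcard
      have h1 : ∀ τ : Equiv.Perm β, τ = 1 := fun τ => Equiv.ext (fun x => (hβ.false x).elim)
      have h2 : tot (1 : Equiv.Perm β) = 0 := by
        rw [tot_eq, Equiv.Perm.cycleType_one, Equiv.Perm.support_one]
        simp [hcard]
      calc ∑ τ : Equiv.Perm β, 2 ^ tot τ = ∑ _τ : Equiv.Perm β, 1 := by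
            apply Finset.sum_congr rfl
            intro τ _
            rw [h1 τ, h2, pow_zero]
        _ = Fintype.card (Equiv.Perm β) := by simp
        _ = 1 := by rw [Fintype.card_perm, hcard]; rfl
    · -- inductive step
      obtain ⟨m, rfl⟩ : ∃ m, n = m + 1 := ⟨n - 1, by omega⟩
      set n := m + 1
      -- the sum over cycles through a point
      have hmain : ∀ x₀ : β, (∑ τ : Equiv.Perm β, 2 ^ tot τ) = 2 * n.factorial +
          ∑ c ∈ univ.filter (fun c : Equiv.Perm β => c.IsCycle ∧ x₀ ∈ c.support),
            2 * (n - c.support.card + 1).factorial := by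
        intro x₀
        rw [← Finset.sum_filter_add_sum_filter_not univ (fun π : Equiv.Perm β => π x₀ = x₀)]
        have hpart1 : ∑ π ∈ univ.filter (fun π : Equiv.Perm β => π x₀ = x₀), 2 ^ (tot π)
            = 2 * n.factorial := by
          rw [sum_fixing_point x₀]
          have hcs : Fintype.card {y // y ≠ x₀} = m := by
            rw [Fintype.card_subtype_compl (p := fun y => y = x₀), Fintype.card_subtype_eq, hcard]
            omega
          have hIH := IH m (by omega) {y // y ≠ x₀} hcs
          calc ∑ τ : Equiv.Perm {y // y ≠ x₀}, 2 ^ (tot τ + 1)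
              = ∑ τ : Equiv.Perm {y // y ≠ x₀}, 2 ^ (tot τ) * 2 := by
                apply Finset.sum_congr rfl; intro τ _; rw [pow_succ]
            _ = (∑ τ : Equiv.Perm {y // y ≠ x₀}, 2 ^ (tot τ)) * 2 := by
                rw [Finset.sum_mul]
            _ = 2 * n.factorial := by rw [hIH]; ring
        rw [hpart1]
        congr 1
        -- part 2
        have hfilter : ∀ π : Equiv.Perm β, ¬ π x₀ = x₀ →
            (univ.filter fun c : Equiv.Perm β =>
              (c.IsCycle ∧ x₀ ∈ c.support) ∧ c ∈ π.cycleFactorsFinset) = {π.cycleOf x₀} := by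
          intro π hπ
          ext c
          simp only [mem_filter, mem_univ, true_and, mem_singleton]
          constructor
          · rintro ⟨⟨_, hx0⟩, hfac⟩
            exact Equiv.Perm.cycle_is_cycleOf hx0 hfac
          · rintro rfl
            have hsup : x₀ ∈ π.support := Equiv.Perm.mem_support.mpr hπ
            refine ⟨⟨Equiv.Perm.isCycle_cycleOf π hπ, ?_⟩, ?_⟩
            · rw [Equiv.Perm.mem_support_cycleOf_iff]
              exact ⟨Equiv.Perm.SameCycle.refl π x₀, hsup⟩
            · exact Equiv.Perm.cycleOf_mem_cycleFactorsFinset_iff.mpr hsup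
        calc ∑ π ∈ univ.filter (fun π : Equiv.Perm β => ¬ π x₀ = x₀), 2 ^ tot π
            = ∑ π ∈ univ.filter (fun π : Equiv.Perm β => ¬ π x₀ = x₀),
                ∑ c ∈ univ.filter (fun c : Equiv.Perm β => c.IsCycle ∧ x₀ ∈ c.support),
                  (if c ∈ π.cycleFactorsFinset then 2 ^ tot π else 0) := by
              apply Finset.sum_congr rfl
              intro π hπ
              rw [← Finset.sum_filter, Finset.filter_filter, hfilter π (by
                simpa using (Finset.mem_filter.mp hπ).2)]
              simp
          _ = ∑ c ∈ univ.filter (fun c : Equiv.Perm β => c.IsCycle ∧ x₀ ∈ c.support),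
                ∑ π ∈ univ.filter (fun π : Equiv.Perm β => ¬ π x₀ = x₀),
                  (if c ∈ π.cycleFactorsFinset then 2 ^ tot π else 0) := Finset.sum_comm
          _ = ∑ c ∈ univ.filter (fun c : Equiv.Perm β => c.IsCycle ∧ x₀ ∈ c.support),
                2 * (n - c.support.card + 1).factorial := by
              apply Finset.sum_congr rfl
              intro c hc
              obtain ⟨hcyc, hx0⟩ := (Finset.mem_filter.mp hc).2
              rw [← Finset.sum_filter, Finset.filter_filter]
              have heq : (univ.filter fun π : Equiv.Perm β =>
                  (¬ π x₀ = x₀) ∧ c ∈ π.cycleFactorsFinset)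
                  = univ.filter (fun π => c ∈ π.cycleFactorsFinset) := by
                ext π
                simp only [mem_filter, mem_univ, true_and, and_iff_right_iff_imp]
                intro hfac
                have := Equiv.Perm.mem_cycleFactorsFinset_support_le hfac hx0
                exact Equiv.Perm.mem_support.mp this
              rw [heq, sum_cycle_mem c hcyc]
              have hcs : Fintype.card {x // x ∉ c.support} = n - c.support.card := by
                rw [card_compl_support, hcard]
              have hlt : n - c.support.card < n := by
                have := hcyc.two_le_card_support
                omega
              have hIH := IH (n - c.support.card) hlt {x // x ∉ c.support} hcs
              calc ∑ τ : Equiv.Perm {x // x ∉ c.support}, 2 ^ (tot τ + 1)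
                  = ∑ τ : Equiv.Perm {x // x ∉ c.support}, 2 ^ (tot τ) * 2 := by
                    apply Finset.sum_congr rfl; intro τ _; rw [pow_succ]
                _ = (∑ τ : Equiv.Perm {x // x ∉ c.support}, 2 ^ (tot τ)) * 2 := by
                    rw [Finset.sum_mul]
                _ = 2 * (n - c.support.card + 1).factorial := by rw [hIH]; ring
      -- now sum over all x₀
      set S := ∑ τ : Equiv.Perm β, 2 ^ tot τ with hS
      have hglob : n * S = n * (2 * n.factorial) +
          ∑ c ∈ univ.filter (fun c : Equiv.Perm β => c.IsCycle),
            c.support.card * (2 * (n - c.support.card + 1).factorial) := by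
        have h1 : n * S = ∑ _x₀ : β, S := by
          rw [Finset.sum_const, Finset.card_univ, hcard, smul_eq_mul]
        rw [h1, Finset.sum_congr rfl (fun x₀ _ => hmain x₀), Finset.sum_add_distrib]
        congr 1
        · rw [Finset.sum_const, Finset.card_univ, hcard, smul_eq_mul]
        · calc ∑ x₀ : β, ∑ c ∈ univ.filter (fun c : Equiv.Perm β =>
                c.IsCycle ∧ x₀ ∈ c.support), 2 * (n - c.support.card + 1).factorial
              = ∑ x₀ : β, ∑ c ∈ univ.filter (fun c : Equiv.Perm β => c.IsCycle),
                  (if x₀ ∈ c.support then 2 * (n - c.support.card + 1).factorial else 0) := by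
                apply Finset.sum_congr rfl
                intro x₀ _
                rw [← Finset.sum_filter, Finset.filter_filter]
            _ = ∑ c ∈ univ.filter (fun c : Equiv.Perm β => c.IsCycle),
                  ∑ x₀ : β, (if x₀ ∈ c.support then
                    2 * (n - c.support.card + 1).factorial else 0) := Finset.sum_comm
            _ = ∑ c ∈ univ.filter (fun c : Equiv.Perm β => c.IsCycle),
                  c.support.card * (2 * (n - c.support.card + 1).factorial) := by
                apply Finset.sum_congr rfl
                intro c _
                rw [Finset.sum_ite_mem, Finset.univ_inter, Finset.sum_const, smul_eq_mul]
      -- group cycles by support size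
      have hgroup : ∑ c ∈ univ.filter (fun c : Equiv.Perm β => c.IsCycle),
            c.support.card * (2 * (n - c.support.card + 1).factorial)
          = ∑ j ∈ Finset.Icc 2 n,
              (univ.filter (fun c : Equiv.Perm β => c.IsCycle ∧ c.support.card = j)).card *
                (j * (2 * (n - j + 1).factorial)) := by
        calc ∑ c ∈ univ.filter (fun c : Equiv.Perm β => c.IsCycle),
              c.support.card * (2 * (n - c.support.card + 1).factorial)
            = ∑ c ∈ univ.filter (fun c : Equiv.Perm β => c.IsCycle),
                ∑ j ∈ Finset.Icc 2 n, (if c.support.card = j then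
                  j * (2 * (n - j + 1).factorial) else 0) := by
              apply Finset.sum_congr rfl
              intro c hc
              have hcyc := (Finset.mem_filter.mp hc).2
              have h2 : 2 ≤ c.support.card := hcyc.two_le_card_support
              have hle : c.support.card ≤ n := by
                rw [← hcard]; simpa using Finset.card_le_univ c.support
              rw [Finset.sum_ite_eq (Finset.Icc 2 n) c.support.card
                (fun j => j * (2 * (n - j + 1).factorial))]
              rw [if_pos (Finset.mem_Icc.mpr ⟨h2, hle⟩)]
          _ = ∑ j ∈ Finset.Icc 2 n, ∑ c ∈ univ.filter (fun c : Equiv.Perm β => c.IsCycle),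
                (if c.support.card = j then j * (2 * (n - j + 1).factorial) else 0) :=
              Finset.sum_comm
          _ = ∑ j ∈ Finset.Icc 2 n,
              (univ.filter (fun c : Equiv.Perm β => c.IsCycle ∧ c.support.card = j)).card *
                (j * (2 * (n - j + 1).factorial)) := by
              apply Finset.sum_congr rfl
              intro j _
              rw [← Finset.sum_filter, Finset.filter_filter, Finset.sum_const, smul_eq_mul]
      -- evaluate each fiber
      have hfiber : ∀ j ∈ Finset.Icc 2 n,
          (univ.filter (fun c : Equiv.Perm β => c.IsCycle ∧ c.support.card = j)).card *
            (j * (2 * (n - j + 1).factorial)) = 2 * n.factorial * (n + 1 - j) := by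
        intro j hj
        obtain ⟨hj2, hjn⟩ := Finset.mem_Icc.mp hj
        have hcc := card_cycles_mul (β := β) j hj2
        rw [hcard] at hcc
        have hfact : (n - j).factorial * n.descFactorial j = n.factorial :=
          Nat.factorial_mul_descFactorial hjn
        have hfs : (n - j + 1).factorial = (n - j + 1) * (n - j).factorial :=
          Nat.factorial_succ (n - j)
        have hnj : n + 1 - j = n - j + 1 := by omega
        calc (univ.filter (fun c : Equiv.Perm β =>
              c.IsCycle ∧ c.support.card = j)).card * (j * (2 * (n - j + 1).factorial))
            = ((univ.filter (fun c : Equiv.Perm β =>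
                c.IsCycle ∧ c.support.card = j)).card * j) * (2 * (n - j + 1).factorial) := by
              ring
          _ = n.descFactorial j * (2 * ((n - j + 1) * (n - j).factorial)) := by rw [hcc, hfs]
          _ = 2 * (n - j + 1) * ((n - j).factorial * n.descFactorial j) := by ring
          _ = 2 * (n - j + 1) * n.factorial := by rw [hfact]
          _ = 2 * n.factorial * (n + 1 - j) := by rw [hnj]; ring
      rw [hgroup, Finset.sum_congr rfl hfiber] at hglob
      -- Gauss sum
      have hgauss : ∑ j ∈ Finset.Icc 2 n, 2 * n.factorial * (n + 1 - j)
          = 2 * n.factorial * ∑ j ∈ Finset.Icc 2 n, (n + 1 - j) := by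
        rw [Finset.mul_sum]
      have hg2 : (∑ j ∈ Finset.Icc 2 n, (n + 1 - j)) * 2 = n * m := by
        have := gauss_aux m
        have h2 : ∑ j ∈ Finset.Icc 2 (m + 1), (m + 2 - j) = ∑ j ∈ Finset.Icc 2 n, (n + 1 - j) := by
          apply Finset.sum_congr rfl
          intro j hj
          obtain ⟨_, hjn⟩ := Finset.mem_Icc.mp hj
          omega
        rw [← h2, this, Finset.sum_range_id_mul_two]
        simp
        left; rfl
      rw [hgauss] at hglob
      -- final arithmetic
      have hfin : n * S = n * (n + 1).factorial := by
        rw [hglob]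
        have h3 : 2 * n.factorial * (∑ j ∈ Finset.Icc 2 n, (n + 1 - j))
            = n.factorial * ((∑ j ∈ Finset.Icc 2 n, (n + 1 - j)) * 2) := by ring
        rw [h3, hg2]
        have h4 : (n + 1).factorial = (n + 1) * n.factorial := Nat.factorial_succ n
        rw [h4]
        ring
      exact Nat.eq_of_mul_eq_mul_left hn hfin


/-- For `1 ≤ k ≤ m`, `∑_{π ∈ Sym_m} αₖ(π) 2^{α(π)} = 2 ⬝ C(m,k) ⬝ (k-1)! ⬝ (m-k+1)!`. -/
theorem sum_cycCount_two_pow (m k : ℕ) (hm : 1 ≤ m) (hk1 : 1 ≤ k) (hkm : k ≤ m) :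
    ∑ π : Equiv.Perm (Fin m), cycCount k π * 2 ^ cycTotal π =
      2 * m.choose k * (k - 1).factorial * (m - k + 1).factorial := by
  classical
  have htot : ∀ π : Equiv.Perm (Fin m), cycTotal π = tot π := by
    intro π
    unfold cycTotal tot
    congr!
  rcases eq_or_lt_of_le hk1 with hk1' | hk2
  · -- k = 1
    have hk : k = 1 := hk1'.symm
    subst hk
    have hfix : ∀ π : Equiv.Perm (Fin m), cycCount 1 π =
        ∑ x : Fin m, (if π x = x then 1 else 0) := by
      intro π
      rw [cycCount, if_pos rfl, Finset.card_filter]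
    have hL : ∑ π : Equiv.Perm (Fin m), cycCount 1 π * 2 ^ cycTotal π
        = m * (2 * m.factorial) := by
      calc ∑ π : Equiv.Perm (Fin m), cycCount 1 π * 2 ^ cycTotal π
          = ∑ π : Equiv.Perm (Fin m), ∑ x : Fin m,
              (if π x = x then 2 ^ tot π else 0) := by
            apply Finset.sum_congr rfl
            intro π _
            rw [hfix π, htot π, Finset.sum_mul]
            apply Finset.sum_congr rfl
            intro x _
            rw [ite_mul, one_mul, zero_mul]
        _ = ∑ x : Fin m, ∑ π : Equiv.Perm (Fin m),
              (if π x = x then 2 ^ tot π else 0) := Finset.sum_comm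
        _ = ∑ _x : Fin m, 2 * m.factorial := by
            apply Finset.sum_congr rfl
            intro x _
            rw [← Finset.sum_filter, sum_fixing_point x]
            have hcs : Fintype.card {y // y ≠ x} = m - 1 := by
              rw [Fintype.card_subtype_compl (p := fun y => y = x), Fintype.card_subtype_eq,
                Fintype.card_fin]
            have hIH := totSum_eq (m - 1) {y // y ≠ x} hcs
            have hm1 : m - 1 + 1 = m := by omega
            rw [hm1] at hIH
            calc ∑ τ : Equiv.Perm {y // y ≠ x}, 2 ^ (tot τ + 1)
                = ∑ τ : Equiv.Perm {y // y ≠ x}, 2 ^ (tot τ) * 2 := by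
                  apply Finset.sum_congr rfl; intro τ _; rw [pow_succ]
              _ = (∑ τ : Equiv.Perm {y // y ≠ x}, 2 ^ (tot τ)) * 2 := by rw [Finset.sum_mul]
              _ = 2 * m.factorial := by rw [hIH]; ring
        _ = m * (2 * m.factorial) := by
            rw [Finset.sum_const, Finset.card_univ, Fintype.card_fin, smul_eq_mul]
    rw [hL, Nat.choose_one_right]
    have hm1 : m - 1 + 1 = m := by omega
    rw [hm1]
    simp [Nat.factorial]
    ring
  · -- 2 ≤ k
    have hk2 : 2 ≤ k := hk2
    have hcount : ∀ π : Equiv.Perm (Fin m), cycCount k π =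
        ∑ c ∈ univ.filter (fun c : Equiv.Perm (Fin m) => c.IsCycle ∧ c.support.card = k),
          (if c ∈ π.cycleFactorsFinset then 1 else 0) := by
      intro π
      rw [cycCount, if_neg (by omega), Equiv.Perm.cycleType_def, Multiset.count_map,
        ← Finset.filter_val, Finset.card_val, ← Finset.sum_filter, Finset.filter_filter]
      rw [Finset.sum_const, smul_eq_mul, mul_one]
      congr 1
      ext c
      simp only [Finset.mem_filter, Finset.mem_univ, true_and, Function.comp_apply]
      constructor
      · rintro ⟨hfac, hcard⟩
        exact ⟨⟨(Equiv.Perm.mem_cycleFactorsFinset_iff.mp hfac).1, hcard.symm⟩, hfac⟩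
      · rintro ⟨⟨hcyc, hcard⟩, hfac⟩
        exact ⟨hfac, hcard.symm⟩
    calc ∑ π : Equiv.Perm (Fin m), cycCount k π * 2 ^ cycTotal π
        = ∑ π : Equiv.Perm (Fin m),
            ∑ c ∈ univ.filter (fun c : Equiv.Perm (Fin m) => c.IsCycle ∧ c.support.card = k),
              (if c ∈ π.cycleFactorsFinset then 2 ^ tot π else 0) := by
          apply Finset.sum_congr rfl
          intro π _
          rw [hcount π, htot π, Finset.sum_mul]
          apply Finset.sum_congr rfl
          intro c _
          rw [ite_mul, one_mul, zero_mul]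
      _ = ∑ c ∈ univ.filter (fun c : Equiv.Perm (Fin m) => c.IsCycle ∧ c.support.card = k),
            ∑ π : Equiv.Perm (Fin m),
              (if c ∈ π.cycleFactorsFinset then 2 ^ tot π else 0) := Finset.sum_comm
      _ = ∑ c ∈ univ.filter (fun c : Equiv.Perm (Fin m) => c.IsCycle ∧ c.support.card = k),
            2 * (m - k + 1).factorial := by
          apply Finset.sum_congr rfl
          intro c hc
          obtain ⟨hcyc, hcard⟩ := (Finset.mem_filter.mp hc).2
          rw [← Finset.sum_filter, sum_cycle_mem c hcyc]
          have hcs : Fintype.card {x // x ∉ c.support} = m - k := by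
            rw [card_compl_support, hcard, Fintype.card_fin]
          have hIH := totSum_eq (m - k) {x // x ∉ c.support} hcs
          calc ∑ τ : Equiv.Perm {x // x ∉ c.support}, 2 ^ (tot τ + 1)
              = ∑ τ : Equiv.Perm {x // x ∉ c.support}, 2 ^ (tot τ) * 2 := by
                apply Finset.sum_congr rfl; intro τ _; rw [pow_succ]
            _ = (∑ τ : Equiv.Perm {x // x ∉ c.support}, 2 ^ (tot τ)) * 2 := by
                rw [Finset.sum_mul]
            _ = 2 * (m - k + 1).factorial := by rw [hIH]; ring
      _ = (univ.filter (fun c : Equiv.Perm (Fin m) =>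
            c.IsCycle ∧ c.support.card = k)).card * (2 * (m - k + 1).factorial) := by
          rw [Finset.sum_const, smul_eq_mul]
      _ = 2 * m.choose k * (k - 1).factorial * (m - k + 1).factorial := by
          apply Nat.eq_of_mul_eq_mul_right (show 0 < k by omega)
          have hcc := card_cycles_mul (β := Fin m) k hk2
          rw [Fintype.card_fin] at hcc
          have hdesc : m.descFactorial k = k.factorial * m.choose k :=
            Nat.descFactorial_eq_factorial_mul_choose m k
          have hkf : (k - 1).factorial * k = k.factorial := by
            rw [mul_comm]
            exact Nat.mul_factorial_pred (by omega)
          calc (univ.filter (fun c : Equiv.Perm (Fin m) =>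
                c.IsCycle ∧ c.support.card = k)).card * (2 * (m - k + 1).factorial) * k
              = ((univ.filter (fun c : Equiv.Perm (Fin m) =>
                  c.IsCycle ∧ c.support.card = k)).card * k) * (2 * (m - k + 1).factorial) := by
                ring
            _ = m.descFactorial k * (2 * (m - k + 1).factorial) := by rw [hcc]
            _ = (k.factorial * m.choose k) * (2 * (m - k + 1).factorial) := by rw [hdesc]
            _ = 2 * m.choose k * ((k - 1).factorial * k) * (m - k + 1).factorial := by
                rw [hkf]; ring
            _ = 2 * m.choose k * (k - 1).factorial * (m - k + 1).factorial * k := by ring
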